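/- Let A*_s be the kernels defined above in dimension d ≥ 1 and n ∈ ℕ. Then ‖ Σ_{s ∈ ℤ₊^d, s_1+⋯+s_d = n+1} A*_s ‖_{L∞(ℝ^d)} ≍ 2^n n^{d-1}, with implicit constants depending only on d. -/

import Mathlib

open MeasureTheory Real Filter Set
open scoped ENNReal NNReal BigOperators

noncomputable section

/-- The triangle/trapezoidal Fourier multipliers `k_m`. -/
def kmul : ℕ → ℝ → ℝ
  | 0, l => max (1 - |l|) 0
  | (m + 1), l =>
      if |l| < 2 ^ m then 1
      else if |l| ≤ 2 ^ (m + 1) then 2 * (1 - |l| / 2 ^ (m + 1))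
      else 0

/-- `K_m(t) = ∫_ℝ k_m(λ) e^{-2πiλt} dλ`. -/
def Kker (m : ℕ) (t : ℝ) : ℂ :=
  ∫ l : ℝ, (kmul m l : ℂ) * Complex.exp (-(2 * Real.pi * l * t) * Complex.I)

/-- `K_m - K_{m-1}` with `K_{-1} ≡ 0`. -/
def KD (m : ℕ) (t : ℝ) : ℂ :=
  Kker m t - (if m = 0 then 0 else Kker (m - 1) t)

/-- The kernels `A*_s(x) = ∏_j (K_{s_j}(x_j) - K_{s_j-1}(x_j))`. -/
def Astar {d : ℕ} (s : Fin d → ℕ) (x : EuclideanSpace ℝ (Fin d)) : ℂ :=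
  ∏ j, KD (s j) (x j)

/-- Convolution `A*_s ∗ f`. -/
def AstarConv {d : ℕ} (s : Fin d → ℕ) (f : EuclideanSpace ℝ (Fin d) → ℂ)
    (x : EuclideanSpace ℝ (Fin d)) : ℂ :=
  ∫ y, f y * Astar s (x - y)

/-- Decomposition norm of the Nikolskii–Besov space `S^r_{p,θ}B(ℝ^d)` (scalar `r`). -/
def besovNorm {d : ℕ} (p θ : ℝ≥0∞) (r : ℝ) (f : EuclideanSpace ℝ (Fin d) → ℂ) : ℝ≥0∞ :=
  eLpNorm (fun s : Fin d → ℕ =>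
    (2 : ℝ) ^ ((∑ j, (s j : ℝ)) * r) * (eLpNorm (AstarConv s f) p volume).toReal)
    θ Measure.count

/-- The unit ball (class) `S^r_{p,θ}B(ℝ^d)`. -/
def besovClass (d : ℕ) (p θ : ℝ≥0∞) (r : ℝ) : Set (EuclideanSpace ℝ (Fin d) → ℂ) :=
  {f | MemLp f p volume ∧ besovNorm p θ r f ≤ 1}

/-- Dyadic blocks `Q*_{2^s}`. -/
def Qstar {d : ℕ} (s : Fin d → ℕ) : Set (EuclideanSpace ℝ (Fin d)) :=
  {l | ∀ j, (if s j = 0 then (0 : ℝ) else 2 ^ (s j - 1)) ≤ |l j| ∧ |l j| < 2 ^ (s j)}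

/-- `δ*_s(f) = ℱ^{-1}(χ_{Q*_{2^s}} · ℱ f)`. -/
def deltaS {d : ℕ} (s : Fin d → ℕ) (f : EuclideanSpace ℝ (Fin d) → ℂ) :
    EuclideanSpace ℝ (Fin d) → ℂ :=
  FourierTransformInv.fourierInv (Set.indicator (Qstar s) (FourierTransform.fourier f))

/-- `e_M^ℱ(S^r_{p,θ}B)_q` : best approximation by entire functions with spectrum in a
union of dyadic blocks of total measure at most `M`. -/
def eMF (d : ℕ) (p θ : ℝ≥0∞) (r : ℝ) (q : ℝ≥0∞) (M : ℝ) : ℝ≥0∞ :=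
  ⨆ f ∈ besovClass d p θ r,
    ⨅ (L : Finset (Fin d → ℕ))
      (_ : volume (⋃ s ∈ L, Qstar s) ≤ ENNReal.ofReal M),
      eLpNorm (fun x => f x - ∑ s ∈ L, deltaS s f x) q volume

/-- The distributional Fourier transform of `g` is supported in `S`. -/
def HasFourierSupportIn {d : ℕ} (g : EuclideanSpace ℝ (Fin d) → ℂ)
    (S : Set (EuclideanSpace ℝ (Fin d))) : Prop :=
  ∀ φ : SchwartzMap (EuclideanSpace ℝ (Fin d)) ℂ,
    Disjoint (tsupport ⇑φ) S →
      ∫ x, g x * SchwartzMap.fourierTransformCLM ℂ φ x = 0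


/-- One-dimensional block convolution `A*_s ∗ f`. -/
def AstarConv1 (s : ℕ) (f : ℝ → ℂ) (x : ℝ) : ℂ :=
  ∫ y, f y * KD s (x - y)

/-- One-dimensional Nikolskii–Besov decomposition norm of `S^r_{p,θ}B(ℝ)`. -/
def besovNorm1 (p θ : ℝ≥0∞) (r : ℝ) (f : ℝ → ℂ) : ℝ≥0∞ :=
  eLpNorm (fun s : ℕ => (2 : ℝ) ^ ((s : ℝ) * r) * (eLpNorm (AstarConv1 s f) p volume).toReal)
    θ Measure.count

end

lemma kmul_nonneg (m : ℕ) (l : ℝ) : 0 ≤ kmul m l := by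
  cases m with
  | zero => exact le_max_right _ _
  | succ m =>
    simp only [kmul]
    split_ifs with h1 h2
    · norm_num
    · have := div_le_one_of_le₀ h2 (by positivity)
      linarith
    · exact le_refl 0

lemma kmul_le_two (m : ℕ) (l : ℝ) : kmul m l ≤ 2 := by
  cases m with
  | zero => simp only [kmul]; rcases abs_nonneg l with h; apply max_le <;> linarith
  | succ m =>
    simp only [kmul]
    split_ifs with h1 h2
    · norm_num
    · have h0 : (0:ℝ) ≤ |l| / 2 ^ (m+1) := by positivity
      linarith
    · norm_num

lemma kmul_eq_zero_of (m : ℕ) (l : ℝ) (h : (2:ℝ) ^ m < |l|) : kmul m l = 0 := by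
  cases m with
  | zero => simp only [kmul, pow_zero] at *; rw [max_eq_right]; linarith
  | succ m =>
    have h2 : (2:ℝ)^m ≤ 2^(m+1) := by
      have : (1:ℝ) ≤ 2 := one_le_two
      exact pow_le_pow_right₀ this (Nat.le_succ m)
    simp only [kmul]
    rw [if_neg (by linarith), if_neg (by linarith)]

lemma kmul_le_indicator (m : ℕ) (l : ℝ) :
    kmul m l ≤ Set.indicator (Set.Icc (-(2^m)) (2^m)) (fun _ => (2:ℝ)) l := by
  by_cases h : l ∈ Set.Icc (-(2:ℝ)^m) (2^m)
  · rw [Set.indicator_of_mem h]; exact kmul_le_two m l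
  · rw [Set.indicator_of_notMem h]
    have : (2:ℝ)^m < |l| := by
      simp only [Set.mem_Icc, not_and_or, not_le] at h
      rcases h with h | h
      · rw [abs_of_neg (by nlinarith [pow_pos (two_pos (α:=ℝ)) m])]; linarith
      · exact lt_of_lt_of_le h (le_abs_self l)
    rw [kmul_eq_zero_of m l this]

lemma measurable_kmul (m : ℕ) : Measurable (kmul m) := by
  cases m with
  | zero => exact (continuous_const.sub continuous_abs).max continuous_const |>.measurable
  | succ m =>
    apply Measurable.ite (measurableSet_lt measurable_abs measurable_const) measurable_const
    apply Measurable.ite (measurableSet_le measurable_abs measurable_const)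
    · exact (measurable_const.mul ((measurable_const.sub (measurable_abs.div measurable_const)))).comp measurable_id
    · exact measurable_const

lemma integrable_kmul (m : ℕ) : Integrable (kmul m) := by
  apply Integrable.mono' (g := Set.indicator (Set.Icc (-(2^m)) (2^m)) (fun _ => (2:ℝ)))
  · exact (integrable_indicator_iff measurableSet_Icc).2
      (integrableOn_const measure_Icc_lt_top.ne)
  · exact (measurable_kmul m).aestronglyMeasurable
  · filter_upwards with l
    rw [Real.norm_eq_abs, abs_of_nonneg (kmul_nonneg m l)]
    exact kmul_le_indicator m l

lemma integral_kmul_le (m : ℕ) : ∫ l, kmul m l ≤ 2^(m+2) := by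
  have h := integral_mono (integrable_kmul m)
    ((integrable_indicator_iff measurableSet_Icc).2
      (integrableOn_const measure_Icc_lt_top.ne))
    (kmul_le_indicator m)
  rw [integral_indicator_const _ measurableSet_Icc, measureReal_def, Real.volume_Icc] at h
  have h2 : (2:ℝ)^m - (-(2^m)) = 2^(m+1) := by ring
  rw [h2, ENNReal.toReal_ofReal (by positivity), smul_eq_mul] at h
  calc ∫ l, kmul m l ≤ 2^(m+1) * 2 := h
    _ = 2^(m+2) := by ring

-- helpers about trapezoid values
private lemma trap1 {A B : ℝ} (hB : 0 < B) (h : B/2 ≤ A) : 2*(1 - A/B) ≤ 1 := by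
  have : (1:ℝ)/2 ≤ A/B := by rw [le_div_iff₀ hB]; linarith
  linarith

private lemma trap2 {A B : ℝ} (hB : 0 < B) (h : B ≤ A) : 2*(1 - A/B) ≤ 0 := by
  have : (1:ℝ) ≤ A/B := by rw [le_div_iff₀ hB]; linarith
  linarith

private lemma trap3 {A B : ℝ} (hB : 0 < B) (h : A ≤ B) : 0 ≤ 2*(1 - A/B) := by
  have : A/B ≤ 1 := by rw [div_le_one hB]; linarith
  linarith

private lemma trap4 {A B : ℝ} (hB : 0 < B) (h : A ≤ 3/4*B) : 1/2 ≤ 2*(1 - A/B) := by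
  have : A/B ≤ 3/4 := by rw [div_le_iff₀ hB]; linarith
  linarith

private lemma trap6 {A B : ℝ} (hB : 0 < B) (h : 3/4*B ≤ A) : 2*(1 - A/B) ≤ 1/2 := by
  have : (3:ℝ)/4 ≤ A/B := by rw [le_div_iff₀ hB]; linarith
  linarith

lemma kmul_mono (m : ℕ) (l : ℝ) : kmul m l ≤ kmul (m+1) l := by
  have habs := abs_nonneg l
  cases m with
  | zero =>
    simp only [kmul, pow_zero, pow_one]
    split_ifs with h1 h2
    · exact max_le (by linarith) (by norm_num)
    · rw [max_eq_right (by linarith)]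
      have := trap3 (two_pos (α := ℝ)) (by simpa using h2)
      linarith
    · rw [max_eq_right (by linarith)]
  | succ m =>
    have hp : (0:ℝ) < 2^m := by positivity
    have hp1 : (0:ℝ) < 2^(m+1) := by positivity
    have hp2 : (0:ℝ) < 2^(m+1+1) := by positivity
    have he1 : (2:ℝ)^(m+1) = 2*2^m := by ring
    have he2 : (2:ℝ)^(m+1+1) = 2*2^(m+1) := by ring
    simp only [kmul]
    split_ifs with a1 b1 b2 a2 b1' b2'
    · exact le_refl _
    · linarith
    · linarith
    · exact trap1 (A := |l|) hp1 (by linarith)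
    · have h1 := trap2 (A := |l|) hp1 (by linarith)
      have h2 := trap3 (A := |l|) hp2 (by linarith)
      linarith
    · exact trap2 (A := |l|) hp1 (by linarith)
    · norm_num
    · exact trap3 (A := |l|) hp2 (by linarith)
    · exact le_refl _

lemma kmul_succ_lower (m : ℕ) (l : ℝ) :
    Set.indicator (Set.Icc ((3/4)*2^m) ((3/2)*2^m)) (fun _ => (1/2:ℝ)) l
      ≤ kmul (m+1) l - kmul m l := by
  by_cases hmem : l ∈ Set.Icc ((3/4)*(2:ℝ)^m) ((3/2)*2^m)
  swap
  · rw [Set.indicator_of_notMem hmem]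
    linarith [kmul_mono m l]
  rw [Set.indicator_of_mem hmem]
  obtain ⟨hlo, hhi⟩ := hmem
  have hp : (0:ℝ) < 2^m := by positivity
  have hlpos : 0 < l := by linarith
  have habs : |l| = l := abs_of_pos hlpos
  cases m with
  | zero =>
    have hB0 : (0:ℝ) < 2^(0+1) := by norm_num
    have heB : (2:ℝ)^(0+1) = 2 := by norm_num
    norm_num at hlo hhi
    simp only [kmul, pow_zero, habs]
    split_ifs with h1 h2
    · rw [max_eq_left (by linarith)]; linarith
    · rw [max_eq_right (by linarith)]
      have := trap4 (A := l) hB0 (by linarith)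
      linarith
    · linarith
  | succ m =>
    have hp1 : (0:ℝ) < 2^(m+1) := by positivity
    have hp2 : (0:ℝ) < 2^(m+1+1) := by positivity
    have he1 : (2:ℝ)^(m+1) = 2*2^m := by ring
    have he2 : (2:ℝ)^(m+1+1) = 2*2^(m+1) := by ring
    simp only [kmul, habs]
    split_ifs with a1 b1 b2 a2 b1' b2'
    · linarith
    · have := trap6 (A := l) hp1 (by linarith)
      linarith
    · linarith
    · linarith
    · have h1 := trap4 (A := l) hp2 (by linarith)
      have h2 := trap2 (A := l) hp1 (by linarith)
      linarith
    · have := trap4 (A := l) hp2 (by linarith)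
      linarith
    · linarith
    · linarith
    · linarith

lemma integral_indicator_Icc (a b c : ℝ) (h : a ≤ b) :
    ∫ l, Set.indicator (Set.Icc a b) (fun _ => c) l = c * (b - a) := by
  rw [MeasureTheory.integral_indicator_const _ measurableSet_Icc, measureReal_def, Real.volume_Icc,
    ENNReal.toReal_ofReal (by linarith), smul_eq_mul]
  ring

lemma integrable_indicator_Icc (a b c : ℝ) :
    MeasureTheory.Integrable (Set.indicator (Set.Icc a b) (fun _ => c)) := by
  exact (MeasureTheory.integrable_indicator_iff measurableSet_Icc).2
    (MeasureTheory.integrableOn_const measure_Icc_lt_top.ne)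

lemma integral_kmul_zero_ge : (1:ℝ)/4 ≤ ∫ l, kmul 0 l := by
  have hpt : ∀ l, Set.indicator (Set.Icc (0:ℝ) (1/2)) (fun _ => (1/2:ℝ)) l ≤ kmul 0 l := by
    intro l
    by_cases hm : l ∈ Set.Icc (0:ℝ) (1/2)
    · rw [Set.indicator_of_mem hm]
      obtain ⟨h1, h2⟩ := hm
      have : |l| = l := abs_of_nonneg h1
      simp only [kmul, this]
      exact le_max_of_le_left (by linarith)
    · rw [Set.indicator_of_notMem hm]; exact kmul_nonneg 0 l
  have := MeasureTheory.integral_mono (integrable_indicator_Icc 0 (1/2) (1/2))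
    (integrable_kmul 0) hpt
  rwa [integral_indicator_Icc _ _ _ (by norm_num), show (1/2:ℝ) * (1/2 - 0) = 1/4 by norm_num]
    at this

lemma integral_kmul_diff_ge (m : ℕ) :
    (3/8)*2^m ≤ (∫ l, kmul (m+1) l) - ∫ l, kmul m l := by
  have hint : (∫ l, kmul (m+1) l) - ∫ l, kmul m l = ∫ l, (kmul (m+1) l - kmul m l) :=
    (MeasureTheory.integral_sub (integrable_kmul (m+1)) (integrable_kmul m)).symm
  rw [hint]
  have := MeasureTheory.integral_mono
    (integrable_indicator_Icc ((3/4)*2^m) ((3/2)*2^m) (1/2))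
    ((integrable_kmul (m+1)).sub (integrable_kmul m)) (kmul_succ_lower m)
  rw [integral_indicator_Icc] at this
  · calc (3:ℝ)/8*2^m = 1/2 * ((3/2)*2^m - (3/4)*2^m) := by ring
      _ ≤ _ := this
  · nlinarith [pow_pos (two_pos (α := ℝ)) m]

lemma norm_term (m : ℕ) (l r : ℝ) :
    ‖(kmul m l : ℂ) * Complex.exp ((r:ℂ) * Complex.I)‖ = kmul m l := by
  rw [norm_mul, Complex.norm_exp_ofReal_mul_I, mul_one, Complex.norm_real,
    Real.norm_eq_abs, abs_of_nonneg (kmul_nonneg m l)]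

lemma arg_eq (l t : ℝ) : (-(2 * Real.pi * l * t) * Complex.I : ℂ)
    = ((-(2 * Real.pi * l * t) : ℝ) : ℂ) * Complex.I := by push_cast; ring

lemma norm_Kker_le (m : ℕ) (t : ℝ) : ‖Kker m t‖ ≤ 2^(m+2) := by
  refine le_trans (MeasureTheory.norm_integral_le_integral_norm _) ?_
  have : ∀ l : ℝ, ‖(kmul m l : ℂ) * Complex.exp (-(2 * Real.pi * l * t) * Complex.I)‖
      = kmul m l := by
    intro l; rw [arg_eq]; exact norm_term m l _
  calc ∫ l, ‖(kmul m l : ℂ) * Complex.exp (-(2 * Real.pi * l * t) * Complex.I)‖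
      = ∫ l, kmul m l := by simp_rw [this]
    _ ≤ 2^(m+2) := integral_kmul_le m

lemma norm_KD_le (m : ℕ) (t : ℝ) : ‖KD m t‖ ≤ 2^(m+3) := by
  unfold KD
  cases m with
  | zero =>
    simp only [if_pos rfl, sub_zero]
    have := norm_Kker_le 0 t
    norm_num at this ⊢
    linarith
  | succ m =>
    rw [if_neg (Nat.succ_ne_zero m), Nat.add_sub_cancel]
    refine (norm_sub_le _ _).trans ?_
    have h1 := norm_Kker_le (m+1) t
    have h2 := norm_Kker_le m t
    have e1 : (2:ℝ)^(m+1+2) = 2^m*8 := by ring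
    have e2 : (2:ℝ)^(m+2) = 2^m*4 := by ring
    have e3 : (2:ℝ)^(m+1+3) = 2^m*16 := by ring
    have hp : (0:ℝ) < 2^m := by positivity
    linarith

lemma Kker_zero (m : ℕ) : Kker m 0 = ((∫ l, kmul m l : ℝ) : ℂ) := by
  unfold Kker
  have h : ∀ l : ℝ, (kmul m l : ℂ) * Complex.exp (-(2 * Real.pi * l * ((0:ℝ):ℂ)) * Complex.I)
      = ((kmul m l : ℝ) : ℂ) := by
    intro l
    simp
  simp_rw [h]
  exact integral_ofReal (𝕜 := ℂ)

lemma continuous_Kker (m : ℕ) : Continuous (Kker m) := by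
  unfold Kker
  apply MeasureTheory.continuous_of_dominated
    (bound := kmul m)
  · intro t
    apply AEStronglyMeasurable.mul
    · exact (Complex.measurable_ofReal.comp (measurable_kmul m)).aestronglyMeasurable
    · apply Continuous.aestronglyMeasurable
      fun_prop
  · intro t
    filter_upwards with l
    rw [arg_eq, norm_term]
  · exact integrable_kmul m
  · filter_upwards with l
    fun_prop

lemma continuous_KD (m : ℕ) : Continuous (KD m) := by
  unfold KD
  cases m with
  | zero => simpa using continuous_Kker 0
  | succ m =>
    simp only [Nat.succ_ne_zero, if_neg, Nat.add_sub_cancel]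
    exact (continuous_Kker (m+1)).sub (continuous_Kker m)
    

lemma KD_zero_ge (m : ℕ) : ∃ r : ℝ, KD m 0 = (r : ℂ) ∧ (3/16)*2^m ≤ r := by
  cases m with
  | zero =>
    refine ⟨∫ l, kmul 0 l, ?_, ?_⟩
    · unfold KD; rw [if_pos rfl, sub_zero, Kker_zero]
    · have := integral_kmul_zero_ge; norm_num; linarith
  | succ m =>
    refine ⟨(∫ l, kmul (m+1) l) - ∫ l, kmul m l, ?_, ?_⟩
    · unfold KD
      rw [if_neg (Nat.succ_ne_zero m), Nat.add_sub_cancel, Kker_zero, Kker_zero]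
      push_cast
      ring
    · have := integral_kmul_diff_ge m
      have h2 : (3:ℝ)/16*2^(m+1) = 3/8*2^m := by ring
      linarith

open MeasureTheory in
lemma point_le_eLpNormEssSup {d : ℕ} {g : EuclideanSpace ℝ (Fin d) → ℂ} (hg : Continuous g)
    (x₀ : EuclideanSpace ℝ (Fin d)) :
    ENNReal.ofReal ‖g x₀‖ ≤ eLpNormEssSup g volume := by
  by_contra hcon
  push_neg at hcon
  set C := eLpNormEssSup g volume with hC
  have hae : ∀ᵐ x : EuclideanSpace ℝ (Fin d), (‖g x‖₊ : ℝ≥0∞) ≤ C :=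
    ENNReal.ae_le_essSup (fun x => (‖g x‖₊ : ℝ≥0∞))
  have hU : IsOpen {x : EuclideanSpace ℝ (Fin d) | C < (‖g x‖₊ : ℝ≥0∞)} :=
    isOpen_lt continuous_const (ENNReal.continuous_coe.comp (continuous_nnnorm.comp hg))
  have hx0 : x₀ ∈ {x : EuclideanSpace ℝ (Fin d) | C < (‖g x‖₊ : ℝ≥0∞)} := by
    simp only [Set.mem_setOf_eq, ← enorm_eq_nnnorm, ← ofReal_norm]
    exact hcon
  have hpos := hU.measure_pos volume ⟨x₀, hx0⟩
  rw [ae_iff] at hae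
  simp only [not_le] at hae
  exact absurd hae (ne_of_gt hpos)

lemma card_upper (d' n : ℕ) :
    ((Fintype.piFinset fun _ : Fin (d'+1) => Finset.range (n + 2)).filter
      (fun s => ∑ j, s j = n + 1)).card ≤ (n+2) ^ d' := by
  classical
  have h := Finset.card_le_card_of_injOn
    (s := (Fintype.piFinset fun _ : Fin (d'+1) => Finset.range (n + 2)).filter
      (fun s => ∑ j, s j = n + 1))
    (f := fun s : Fin (d'+1) → ℕ => Fin.init s)
    (t := Fintype.piFinset fun _ : Fin d' => Finset.range (n + 2)) ?_ ?_
  · rw [Fintype.card_piFinset] at h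
    convert h using 2
    simp
  · intro s hs
    simp only [Finset.mem_coe, Finset.mem_filter, Fintype.mem_piFinset] at hs
    simp only [Finset.mem_coe, Fintype.mem_piFinset]
    intro i
    exact hs.1 _
  · intro s hs t ht hst
    simp only [Finset.mem_coe, Finset.mem_filter, Fintype.mem_piFinset] at hs ht
    funext j
    refine Fin.lastCases ?_ ?_ j
    · have h1 := hs.2
      have h2 := ht.2
      rw [Fin.sum_univ_castSucc] at h1 h2
      have : ∀ i : Fin d', s i.castSucc = t i.castSucc := fun i => congrFun hst i
      rw [Finset.sum_congr rfl (fun i _ => this i)] at h1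
      omega
    · intro i
      exact congrFun hst i

lemma card_lower (d' n : ℕ) (hn : 1 ≤ n) :
    n ^ d' ≤ (2*(d'+1)) ^ d' *
      ((Fintype.piFinset fun _ : Fin (d'+1) => Finset.range (n + 2)).filter
        (fun s => ∑ j, s j = n + 1)).card := by
  classical
  set S := ((Fintype.piFinset fun _ : Fin (d'+1) => Finset.range (n + 2)).filter
        (fun s => ∑ j, s j = n + 1)) with hS
  set m := (n+1)/(d'+1) with hm
  -- injection from (Fin d' → range m) into S
  have hmem : ∀ t : Fin d' → ℕ, (∀ i, t i < m) →
      (Fin.snoc t (n+1 - ∑ i, t i) : Fin (d'+1) → ℕ) ∈ S := by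
    intro t ht
    have hsum : ∑ i, t i ≤ n + 1 := by
      calc ∑ i, t i ≤ ∑ _i : Fin d', m := Finset.sum_le_sum fun i _ => (ht i).le
        _ = d' * m := by simp [Finset.sum_const, mul_comm]
        _ ≤ (d'+1) * m := by nlinarith
        _ = m * (d'+1) := by ring
        _ ≤ n + 1 := Nat.div_mul_le_self _ _
    have hm_le : m ≤ n + 1 := Nat.div_le_self _ _
    simp only [hS, Finset.mem_filter, Fintype.mem_piFinset, Finset.mem_range]
    constructor
    · intro j
      refine Fin.lastCases ?_ ?_ j
      · rw [Fin.snoc_last]; omega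
      · intro i
        rw [Fin.snoc_castSucc]
        have := ht i
        omega
    · rw [Fin.sum_univ_castSucc]
      simp only [Fin.snoc_castSucc, Fin.snoc_last]
      omega
  have hcard : m ^ d' ≤ S.card := by
    have h := Finset.card_le_card_of_injOn
      (f := fun t : Fin d' → ℕ => (Fin.snoc t (n+1 - ∑ i, t i) : Fin (d'+1) → ℕ))
      (s := Fintype.piFinset fun _ : Fin d' => Finset.range m) (t := S) ?_ ?_
    · simpa [Fintype.card_piFinset] using h
    · intro t ht
      simp only [Finset.mem_coe, Fintype.mem_piFinset, Finset.mem_range] at ht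
      exact hmem t ht
    · intro t ht u hu htu
      funext i
      have := congrFun htu (Fin.castSucc i)
      simpa [Fin.snoc_castSucc] using this
  -- now numeric
  by_cases hd : d' + 1 ≤ n + 1
  · have hm1 : 1 ≤ m := (Nat.one_le_div_iff (Nat.succ_pos d')).2 hd
    have hdm := Nat.div_add_mod (n+1) (d'+1)
    rw [← hm] at hdm
    have hmod : (n+1) % (d'+1) < d'+1 := Nat.mod_lt _ (Nat.succ_pos d')
    have hn2 : n ≤ 2*(d'+1)*m := by
      have h1 : (d'+1) * m + (d'+1) ≥ n + 1 := by omega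
      have h2 : (d'+1) ≤ (d'+1)*m := Nat.le_mul_of_pos_right _ hm1
      nlinarith
    calc n ^ d' ≤ (2*(d'+1)*m) ^ d' := Nat.pow_le_pow_left hn2 _
      _ = (2*(d'+1))^d' * m^d' := by rw [mul_pow]
      _ ≤ (2*(d'+1))^d' * S.card := Nat.mul_le_mul_left _ hcard
  · -- n + 1 < d' + 1, i.e. n ≤ d'
    have hnd : n ≤ 2*(d'+1) := by omega
    have hone : 1 ≤ S.card := by
      refine Finset.card_pos.2 ⟨(Fin.snoc (fun _ : Fin d' => 0) (n+1) : Fin (d'+1) → ℕ), ?_⟩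
      simp only [hS, Finset.mem_filter, Fintype.mem_piFinset, Finset.mem_range]
      constructor
      · intro j
        refine Fin.lastCases ?_ ?_ j
        · rw [Fin.snoc_last]; omega
        · intro i; rw [Fin.snoc_castSucc]; omega
      · rw [Fin.sum_univ_castSucc]
        simp [Fin.snoc_castSucc, Fin.snoc_last]
    calc n ^ d' ≤ (2*(d'+1)) ^ d' := Nat.pow_le_pow_left hnd _
      _ = (2*(d'+1))^d' * 1 := by ring
      _ ≤ (2*(d'+1))^d' * S.card := Nat.mul_le_mul_left _ hone

/-- `‖Σ_{s₁+⋯+s_d = n+1} A*_s‖_{L∞(ℝ^d)} ≍ 2^n n^{d-1}`,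
constants depending only on `d`. -/
theorem stmt5 (d : ℕ) (hd : 1 ≤ d) :
    ∃ c₁ c₂ : ℝ, 0 < c₁ ∧ 0 < c₂ ∧ ∀ n : ℕ, 1 ≤ n →
      ENNReal.ofReal (c₁ * 2 ^ n * (n : ℝ) ^ (d - 1)) ≤
        eLpNorm (fun x : EuclideanSpace ℝ (Fin d) =>
          ∑ s ∈ (Fintype.piFinset fun _ : Fin d => Finset.range (n + 2)).filter
            (fun s => ∑ j, s j = n + 1), Astar s x) ⊤ volume ∧
      eLpNorm (fun x : EuclideanSpace ℝ (Fin d) =>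
          ∑ s ∈ (Fintype.piFinset fun _ : Fin d => Finset.range (n + 2)).filter
            (fun s => ∑ j, s j = n + 1), Astar s x) ⊤ volume ≤
        ENNReal.ofReal (c₂ * 2 ^ n * (n : ℝ) ^ (d - 1)) := by
  obtain ⟨d', rfl⟩ : ∃ d', d = d' + 1 := ⟨d - 1, by omega⟩
  refine ⟨(3/16)^(d'+1) * 2 / (2*(d'+1) : ℝ) ^ d', 2 * 8^(d'+1) * 3^d',
    by positivity, by positivity, ?_⟩
  intro n hn
  simp only [Nat.add_sub_cancel]
  set S := (Fintype.piFinset fun _ : Fin (d'+1) => Finset.range (n + 2)).filter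
      (fun s => ∑ j, s j = n + 1) with hSdef
  set F := fun x : EuclideanSpace ℝ (Fin (d'+1)) => ∑ s ∈ S, Astar s x with hF
  have hcont : Continuous F := by
    apply continuous_finset_sum
    intro s _
    show Continuous fun x : EuclideanSpace ℝ (Fin (d'+1)) => ∏ j, KD (s j) (x j)
    apply continuous_finset_prod
    intro j _
    exact (continuous_KD (s j)).comp (EuclideanSpace.proj (𝕜 := ℝ) j).continuous
  have hsum_of_mem : ∀ s ∈ S, ∑ j, s j = n + 1 := fun s hs => (Finset.mem_filter.1 hs).2
  have hn1 : (1:ℝ) ≤ n := by exact_mod_cast hn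
  have hnpos : (0:ℝ) < n := by linarith
  constructor
  · -- lower bound
    choose r hr1 hr2 using KD_zero_ge
    have hF0 : F 0 = ((∑ s ∈ S, ∏ j, r (s j) : ℝ) : ℂ) := by
      rw [hF]
      push_cast
      apply Finset.sum_congr rfl
      intro s _
      unfold Astar
      apply Finset.prod_congr rfl
      intro j _
      have h0 : ((0 : EuclideanSpace ℝ (Fin (d'+1))) j) = (0:ℝ) := rfl
      rw [h0, hr1]
    have hsum_lb : (S.card : ℝ) * ((3/16)^(d'+1) * 2^(n+1)) ≤ ∑ s ∈ S, ∏ j, r (s j) := by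
      have : ∀ s ∈ S, (3/16 : ℝ)^(d'+1) * 2^(n+1) ≤ ∏ j, r (s j) := by
        intro s hs
        have : (∏ j : Fin (d'+1), (3/16 : ℝ) * 2^(s j)) ≤ ∏ j, r (s j) := by
          apply Finset.prod_le_prod
          · intro j _; positivity
          · intro j _; exact hr2 (s j)
        calc (3/16 : ℝ)^(d'+1) * 2^(n+1)
            = ∏ j : Fin (d'+1), (3/16 : ℝ) * 2^(s j) := by
              rw [Finset.prod_mul_distrib, Finset.prod_const, Finset.prod_pow_eq_pow_sum,
                hsum_of_mem s hs]
              simp [Finset.card_univ]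
          _ ≤ _ := this
      calc (S.card : ℝ) * ((3/16)^(d'+1) * 2^(n+1))
          = ∑ _s ∈ S, ((3/16:ℝ)^(d'+1) * 2^(n+1)) := by
            rw [Finset.sum_const, nsmul_eq_mul]
        _ ≤ ∑ s ∈ S, ∏ j, r (s j) := Finset.sum_le_sum this
    have hcount : ((n:ℝ))^d' ≤ (2*(d'+1) : ℝ)^d' * S.card := by
      have := card_lower d' n hn
      exact_mod_cast this
    have hnorm_lb : (3/16 : ℝ)^(d'+1) * 2 / (2*(d'+1):ℝ)^d' * 2^n * (n:ℝ)^d' ≤ ‖F 0‖ := by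
      rw [hF0, Complex.norm_real, Real.norm_eq_abs]
      refine le_trans ?_ (le_abs_self _)
      refine le_trans ?_ hsum_lb
      have hden : (0:ℝ) < (2*(d'+1):ℝ)^d' := by positivity
      rw [div_mul_eq_mul_div, div_mul_eq_mul_div, div_le_iff₀ hden]
      have h2 : (2:ℝ)^(n+1) = 2^n * 2 := by ring
      calc (3/16:ℝ)^(d'+1) * 2 * 2^n * (n:ℝ)^d'
          ≤ (3/16:ℝ)^(d'+1) * 2 * 2^n * ((2*(d'+1):ℝ)^d' * S.card) := by
            have hpos : (0:ℝ) < (3/16:ℝ)^(d'+1) * 2 * 2^n := by positivity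
            nlinarith [hcount, hpos]
        _ = (S.card : ℝ) * ((3/16)^(d'+1) * 2^(n+1)) * (2*(d'+1):ℝ)^d' := by ring
    rw [eLpNorm_exponent_top]
    refine le_trans (ENNReal.ofReal_le_ofReal hnorm_lb) ?_
    exact point_le_eLpNormEssSup hcont 0
  · -- upper bound
    have hptwise : ∀ x, ‖F x‖ ≤ (S.card : ℝ) * (8^(d'+1) * 2^(n+1)) := by
      intro x
      calc ‖F x‖ ≤ ∑ s ∈ S, ‖Astar s x‖ := norm_sum_le _ _
        _ ≤ ∑ _s ∈ S, (8:ℝ)^(d'+1) * 2^(n+1) := by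
            apply Finset.sum_le_sum
            intro s hs
            unfold Astar
            rw [norm_prod]
            have : (∏ j, ‖KD (s j) (x j)‖) ≤ ∏ j : Fin (d'+1), (2:ℝ)^(s j) * 8 := by
              apply Finset.prod_le_prod
              · intro j _; exact norm_nonneg _
              · intro j _
                have := norm_KD_le (s j) (x j)
                have he : (2:ℝ)^(s j + 3) = 2^(s j) * 8 := by ring
                linarith [he ▸ this]
            refine this.trans ?_
            rw [Finset.prod_mul_distrib, Finset.prod_const, Finset.prod_pow_eq_pow_sum,
              hsum_of_mem s hs]
            exact le_of_eq (by simp [Finset.card_univ]; ring)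
        _ = (S.card : ℝ) * (8^(d'+1) * 2^(n+1)) := by
            rw [Finset.sum_const, nsmul_eq_mul]
    have hcard : (S.card : ℝ) ≤ ((n:ℝ)+2)^d' := by
      have := card_upper d' n
      have h2 := (Nat.cast_le (α := ℝ)).2 this
      push_cast at h2
      exact h2
    have hfinal : ∀ x, ‖F x‖ ≤ 2 * 8^(d'+1) * 3^d' * 2^n * (n:ℝ)^d' := by
      intro x
      refine (hptwise x).trans ?_
      have h3 : ((n:ℝ)+2)^d' ≤ (3*n)^d' := by
        apply pow_le_pow_left₀ (by linarith) (by linarith)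
      have hcard2 : (S.card : ℝ) ≤ 3^d' * (n:ℝ)^d' := by
        refine hcard.trans (h3.trans_eq ?_)
        rw [mul_pow]
      have hpos : (0:ℝ) < 8^(d'+1) * 2^(n+1) := by positivity
      calc (S.card : ℝ) * (8^(d'+1) * 2^(n+1))
          ≤ (3^d' * (n:ℝ)^d') * (8^(d'+1) * 2^(n+1)) := by nlinarith
        _ = 2 * 8^(d'+1) * 3^d' * 2^n * (n:ℝ)^d' := by ring
    rw [eLpNorm_exponent_top]
    exact eLpNormEssSup_le_of_ae_bound (ae_of_all _ hfinal)
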